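/- In a modular lattice of finite height, the distance d(x,y) between x and y in the (undirected) cover graph equals h(x∨y) − h(x∧y), and equals 2h(x∨y) − h(x) − h(y), and equals h(x) + h(y) − 2h(x∧y). -/

import Mathlib

/-- The cover graph of a lattice: vertices are lattice elements, with an edge
between `u` and `v` when one covers the other. -/
def coverGraph (α : Type*) [Lattice α] : SimpleGraph α where
  Adj u v := u ⋖ v ∨ v ⋖ u
  symm := ⟨fun _ _ h => h.elim Or.inr Or.inl⟩
  loopless := ⟨fun _ h => h.elim (fun h' => h'.ne rfl) (fun h' => h'.ne rfl)⟩

namespace CoverGraphAux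

variable {α : Type*} [Lattice α] [BoundedOrder α] [IsModularLattice α]

/-- Natural-number height. -/
noncomputable def Hn (a : α) : ℕ := (Order.height a).toNat

theorem height_ne_top (hfin : Order.height (⊤ : α) ≠ ⊤) (a : α) :
    Order.height a ≠ ⊤ :=
  ((Order.height_mono (le_top (a := a))).trans_lt (lt_top_iff_ne_top.2 hfin)).ne

theorem coe_Hn (hfin : Order.height (⊤ : α) ≠ ⊤) (a : α) :
    (Hn a : ℕ∞) = Order.height a :=
  ENat.coe_toNat (height_ne_top hfin a)

theorem Hn_mono (hfin : Order.height (⊤ : α) ≠ ⊤) {a b : α} (h : a ≤ b) :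
    Hn a ≤ Hn b := by
  have := Order.height_mono h
  rw [← coe_Hn hfin a, ← coe_Hn hfin b] at this
  exact_mod_cast this

theorem Hn_strictMono (hfin : Order.height (⊤ : α) ≠ ⊤) {a b : α} (h : a < b) :
    Hn a < Hn b := by
  have := Order.height_strictMono h (lt_top_iff_ne_top.2 (height_ne_top hfin a))
  rw [← coe_Hn hfin a, ← coe_Hn hfin b] at this
  exact_mod_cast this

/-- Diamond step for meets: covers push down to meets. -/
theorem inf_step {a b : α} (hab : a ⋖ b) (c : α) :
    c ⊓ a = c ⊓ b ∨ c ⊓ a ⋖ c ⊓ b := by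
  by_cases h : c ⊓ b ≤ a
  · left
    exact le_antisymm (inf_le_inf_left c hab.le) (le_inf inf_le_left h)
  · right
    have hlt : a < a ⊔ (c ⊓ b) := left_lt_sup.2 h
    have hle : a ⊔ (c ⊓ b) ≤ b := sup_le hab.le inf_le_right
    have hsup : a ⊔ (c ⊓ b) = b := by
      rcases lt_or_eq_of_le hle with h' | h'
      · exact absurd h' (hab.2 hlt)
      · exact h'
    have hcov : a ⋖ a ⊔ (c ⊓ b) := by rw [hsup]; exact hab
    have := inf_covBy_of_covBy_sup_left hcov
    have heq : a ⊓ (c ⊓ b) = c ⊓ a := by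
      rw [inf_left_comm, inf_eq_left.mpr hab.le]
    rwa [heq] at this

/-- Diamond step for joins: covers push up to joins. -/
theorem sup_step {a b : α} (hab : a ⋖ b) (c : α) :
    c ⊔ a = c ⊔ b ∨ c ⊔ a ⋖ c ⊔ b := by
  by_cases h : b ≤ c ⊔ a
  · left
    exact le_antisymm (sup_le_sup_left hab.le c) (sup_le le_sup_left h)
  · right
    have hlt : b ⊓ (c ⊔ a) < b := inf_lt_left.2 h
    have hge : a ≤ b ⊓ (c ⊔ a) := le_inf hab.le le_sup_right
    have hinf : b ⊓ (c ⊔ a) = a := by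
      rcases lt_or_eq_of_le hge with h' | h'
      · exact absurd hlt (hab.2 h')
      · exact h'.symm
    have hcov : b ⊓ (c ⊔ a) ⋖ b := by rw [hinf]; exact hab
    have := covBy_sup_of_inf_covBy_left hcov
    have heq : b ⊔ (c ⊔ a) = c ⊔ b := by
      rw [sup_left_comm, sup_eq_left.mpr hab.le]
    rwa [heq] at this

/-- In a modular lattice of finite height, the height is graded. -/
theorem Hn_covBy_aux (hfin : Order.height (⊤ : α) ≠ ⊤) :
    ∀ n : ℕ, ∀ a b : α, Hn b ≤ n → a ⋖ b → Hn b = Hn a + 1 := by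
  intro n
  induction n with
  | zero =>
    intro a b hb hab
    exact absurd (Nat.lt_of_lt_of_le (Hn_strictMono hfin hab.lt) hb) (Nat.not_lt_zero _)
  | succ n ih =>
    intro a b hb hab
    have hub : Hn b ≤ Hn a + 1 := by
      have hh : Order.height b ≤ ((Hn a + 1 : ℕ) : ℕ∞) := by
        rw [Order.height_le_coe_iff]
        intro c hc
        have hcle : Hn c ≤ Hn a := by
          by_cases hca : c ≤ a
          · exact Hn_mono hfin hca
          · -- c ≰ a, so a ⊔ c = b and a ⊓ c ⋖ c
            have hlt : a < a ⊔ c := left_lt_sup.2 hca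
            have hle : a ⊔ c ≤ b := sup_le hab.le hc.le
            have hsup : a ⊔ c = b := by
              rcases lt_or_eq_of_le hle with h' | h'
              · exact absurd h' (hab.2 hlt)
              · exact h'
            have hcov : a ⊓ c ⋖ c := by
              refine inf_covBy_of_covBy_sup_left ?_
              rw [hsup]; exact hab
            have hcn : Hn c ≤ n :=
              Nat.lt_succ_iff.mp (Nat.lt_of_lt_of_le (Hn_strictMono hfin hc) hb)
            have hrec : Hn c = Hn (a ⊓ c) + 1 := ih (a ⊓ c) c hcn hcov
            have hlt' : a ⊓ c < a := by
              rcases lt_or_eq_of_le (inf_le_left : a ⊓ c ≤ a) with h' | h'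
              · exact h'
              · exfalso
                have hac : a ≤ c := by rw [← h']; exact inf_le_right
                rcases lt_or_eq_of_le hac with h'' | h''
                · exact hab.2 h'' hc
                · exact hca (h'' ▸ le_refl a)
            have := Hn_strictMono hfin hlt'
            omega
        calc Order.height c = ((Hn c : ℕ) : ℕ∞) := (coe_Hn hfin c).symm
          _ < ((Hn a + 1 : ℕ) : ℕ∞) := by exact_mod_cast Nat.lt_succ_of_le hcle
      rw [← coe_Hn hfin b] at hh
      exact_mod_cast hh
    have hlb : Hn a < Hn b := Hn_strictMono hfin hab.lt
    omega

theorem Hn_covBy (hfin : Order.height (⊤ : α) ≠ ⊤) {a b : α} (hab : a ⋖ b) :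
    Hn b = Hn a + 1 :=
  Hn_covBy_aux hfin (Hn b) a b le_rfl hab

theorem exists_covBy_le (hfin : Order.height (⊤ : α) ≠ ⊤) {a b : α} (h : a < b) :
    ∃ z, a ⋖ z ∧ z ≤ b := by
  obtain ⟨m, ⟨z, hz, rfl⟩, hmin⟩ := (Nat.lt_wfRel.wf).has_min (Hn '' Set.Ioc a b)
    ⟨Hn b, b, ⟨h, le_rfl⟩, rfl⟩
  refine ⟨z, ⟨hz.1, fun w hw hwz => ?_⟩, hz.2⟩
  exact hmin (Hn w) ⟨w, ⟨hw, hwz.le.trans hz.2⟩, rfl⟩ (Hn_strictMono hfin hwz)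

theorem exists_walk_up (hfin : Order.height (⊤ : α) ≠ ⊤) :
    ∀ n : ℕ, ∀ a b : α, a ≤ b → Hn b = Hn a + n →
      ∃ p : (coverGraph α).Walk a b, p.length = n := by
  intro n
  induction n with
  | zero =>
    intro a b hab hH
    have : a = b := by
      rcases lt_or_eq_of_le hab with h' | h'
      · exact absurd (Hn_strictMono hfin h') (by omega)
      · exact h'
    subst this
    exact ⟨SimpleGraph.Walk.nil, rfl⟩
  | succ n ih =>
    intro a b hab hH
    have hlt : a < b := by
      rcases lt_or_eq_of_le hab with h' | h'
      · exact h'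
      · subst h'; omega
    obtain ⟨z, hz, hzb⟩ := exists_covBy_le hfin hlt
    have hHz : Hn z = Hn a + 1 := Hn_covBy hfin hz
    obtain ⟨p, hp⟩ := ih z b hzb (by omega)
    exact ⟨SimpleGraph.Walk.cons (show (coverGraph α).Adj a z from Or.inl hz) p, by simp [hp]⟩

/-- The key potential functions (with fixed `x`). -/
noncomputable def Fp (x z : α) : ℤ := 2 * (Hn (x ⊔ z) : ℤ) - Hn z
noncomputable def Gp (x z : α) : ℤ := (Hn z : ℤ) - 2 * Hn (x ⊓ z)

theorem edge_bound (hfin : Order.height (⊤ : α) ≠ ⊤) (x : α) {u w : α}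
    (h : (coverGraph α).Adj u w) :
    |Fp x w - Fp x u| ≤ 1 ∧ |Gp x w - Gp x u| ≤ 1 := by
  have key : ∀ u w : α, u ⋖ w → |Fp x w - Fp x u| ≤ 1 ∧ |Gp x w - Gp x u| ≤ 1 := by
    intro u w huw
    have h1 : Hn w = Hn u + 1 := Hn_covBy hfin huw
    have h2 : Hn (x ⊔ w) = Hn (x ⊔ u) ∨ Hn (x ⊔ w) = Hn (x ⊔ u) + 1 := by
      rcases sup_step huw x with h' | h'
      · left; rw [h']
      · right; exact Hn_covBy hfin h'
    have h3 : Hn (x ⊓ w) = Hn (x ⊓ u) ∨ Hn (x ⊓ w) = Hn (x ⊓ u) + 1 := by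
      rcases inf_step huw x with h' | h'
      · left; rw [h']
      · right; exact Hn_covBy hfin h'
    constructor
    · simp only [Fp]
      rcases h2 with h' | h' <;> rw [h', h1] <;> push_cast <;>
        rw [abs_le] <;> constructor <;> linarith
    · simp only [Gp]
      rcases h3 with h' | h' <;> rw [h', h1] <;> push_cast <;>
        rw [abs_le] <;> constructor <;> linarith
  rcases h with h | h
  · exact key u w h
  · obtain ⟨hF, hG⟩ := key w u h
    rw [abs_sub_comm] at hF hG
    exact ⟨hF, hG⟩

theorem walk_bound (hfin : Order.height (⊤ : α) ≠ ⊤) (x : α) :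
    ∀ {u v : α} (p : (coverGraph α).Walk u v),
      |Fp x v - Fp x u| ≤ (p.length : ℤ) ∧ |Gp x v - Gp x u| ≤ (p.length : ℤ) := by
  intro u v p
  induction p with
  | nil => simp
  | cons h q ih =>
    obtain ⟨hF, hG⟩ := edge_bound hfin x h
    obtain ⟨hF', hG'⟩ := ih
    rw [SimpleGraph.Walk.length_cons]
    constructor
    · calc |Fp x _ - Fp x _| ≤ |Fp x _ - Fp x _| + |Fp x _ - Fp x _| := abs_sub_le _ _ _
        _ ≤ (_ : ℤ) := by push_cast; linarith
    · calc |Gp x _ - Gp x _| ≤ |Gp x _ - Gp x _| + |Gp x _ - Gp x _| := abs_sub_le _ _ _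
        _ ≤ (_ : ℤ) := by push_cast; linarith

end CoverGraphAux

open CoverGraphAux in
/-- In a modular lattice of finite height, the cover-graph distance `d(x,y)` equals
`h(x ⊔ y) − h(x ⊓ y) = 2·h(x ⊔ y) − h x − h y = h x + h y − 2·h(x ⊓ y)`
(expressed additively since all heights are finite). -/
theorem dist_eq_height_formulas {α : Type*} [Lattice α] [BoundedOrder α]
    [IsModularLattice α] (hfin : Order.height (⊤ : α) ≠ ⊤) (x y : α) :
    ((coverGraph α).dist x y : ℕ∞) + Order.height (x ⊓ y) = Order.height (x ⊔ y) ∧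
    ((coverGraph α).dist x y : ℕ∞) + Order.height x + Order.height y =
      2 * Order.height (x ⊔ y) ∧
    ((coverGraph α).dist x y : ℕ∞) + 2 * Order.height (x ⊓ y) =
      Order.height x + Order.height y := by
  set G := coverGraph α
  have hax : Hn (x ⊓ y) ≤ Hn x := Hn_mono hfin inf_le_left
  have hay : Hn (x ⊓ y) ≤ Hn y := Hn_mono hfin inf_le_right
  have hxb : Hn x ≤ Hn (x ⊔ y) := Hn_mono hfin le_sup_left
  have hyb : Hn y ≤ Hn (x ⊔ y) := Hn_mono hfin le_sup_right
  -- walks realizing the upper bounds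
  obtain ⟨p1, hp1⟩ := exists_walk_up hfin (Hn (x ⊔ y) - Hn x) x (x ⊔ y) le_sup_left (by omega)
  obtain ⟨p2, hp2⟩ := exists_walk_up hfin (Hn (x ⊔ y) - Hn y) y (x ⊔ y) le_sup_right (by omega)
  obtain ⟨q1, hq1⟩ := exists_walk_up hfin (Hn x - Hn (x ⊓ y)) (x ⊓ y) x inf_le_left (by omega)
  obtain ⟨q2, hq2⟩ := exists_walk_up hfin (Hn y - Hn (x ⊓ y)) (x ⊓ y) y inf_le_right (by omega)
  have hub1 : G.dist x y ≤ (Hn (x ⊔ y) - Hn x) + (Hn (x ⊔ y) - Hn y) := by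
    have := SimpleGraph.dist_le (p1.append p2.reverse)
    simpa [hp1, hp2] using this
  have hub2 : G.dist x y ≤ (Hn x - Hn (x ⊓ y)) + (Hn y - Hn (x ⊓ y)) := by
    have := SimpleGraph.dist_le (q1.reverse.append q2)
    simpa [hq1, hq2] using this
  -- a walk realizing the distance
  have hreach : G.Reachable x y := ⟨p1.append p2.reverse⟩
  obtain ⟨p, hp⟩ := hreach.exists_walk_length_eq_dist
  obtain ⟨hF, hG⟩ := walk_bound hfin x p
  rw [hp] at hF hG
  have hFx : Fp x x = (Hn x : ℤ) := by simp [Fp]; ring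
  have hFy : Fp x y = 2 * (Hn (x ⊔ y) : ℤ) - Hn y := rfl
  have hGx : Gp x x = -(Hn x : ℤ) := by simp [Gp]; ring
  have hGy : Gp x y = (Hn y : ℤ) - 2 * Hn (x ⊓ y) := rfl
  rw [hFx, hFy] at hF
  rw [hGx, hGy] at hG
  have hF' : 2 * (Hn (x ⊔ y) : ℤ) - Hn y - Hn x ≤ (G.dist x y : ℤ) :=
    le_trans (le_abs_self _) hF
  have hG' : (Hn y : ℤ) - 2 * Hn (x ⊓ y) + Hn x ≤ (G.dist x y : ℤ) := by
    have := le_trans (le_abs_self _) hG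
    linarith
  -- now derive the three equations in ℕ
  have key1 : G.dist x y + Hn (x ⊓ y) = Hn (x ⊔ y) := by omega
  have key2 : G.dist x y + Hn x + Hn y = 2 * Hn (x ⊔ y) := by omega
  have key3 : G.dist x y + 2 * Hn (x ⊓ y) = Hn x + Hn y := by omega
  rw [← coe_Hn hfin (x ⊓ y), ← coe_Hn hfin (x ⊔ y), ← coe_Hn hfin x, ← coe_Hn hfin y]
  refine ⟨?_, ?_, ?_⟩ <;> [exact_mod_cast congrArg (Nat.cast : ℕ → ℕ∞) key1;
    exact_mod_cast congrArg (Nat.cast : ℕ → ℕ∞) key2;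
    exact_mod_cast congrArg (Nat.cast : ℕ → ℕ∞) key3]
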